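/- Let y ≠ 0, ‖Xᵀy‖_∞ ≥ λ₁ > λ₂ > 0, θ₁* the projection of y/λ₁ onto C = {θ : ‖Xᵀθ‖_∞ ≤ 1}; set a = y/λ₁ - θ₁*, b = y/λ₂ - θ₁*, Ω = {θ : ⟨θ₁* - y/λ₁, θ - θ₁*⟩ ≥ 0, ⟨θ - y/λ₂, θ₁* - θ⟩ ≥ 0}. If a ≠ 0 and ⟨b,a⟩/(‖b‖₂‖a‖₂) > |⟨x_j,a⟩|/(‖x_j‖₂‖a‖₂), then max_{θ ∈ Ω} ⟨x_j, θ⟩ = ⟨x_j, θ₁*⟩ + ((1/λ₂ - 1/λ₁)/2)[‖x_j^⊥‖₂‖y^⊥‖₂ + ⟨x_j^⊥, y^⊥⟩], where x_j^⊥ and y^⊥ are the components of x_j and y orthogonal to a. -/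

import Mathlib

set_option maxHeartbeats 1000000

open RealInnerProductSpace

lemma scalar_bound (X B bet s A r al : ℝ) (hX : 0 < X) (hA : 0 < A) (hbet : 0 < bet)
    (hs : 0 ≤ s) (hr0 : 0 ≤ r) (hB : 0 ≤ B) (hkey : |al| * B < bet * X)
    (hr2 : r ^ 2 ≤ B ^ 2 / 4 - (bet * s + s ^ 2) * A) :
    X * r ≤ X * B / 2 + al * s * A := by
  have hq : bet * s * A ≤ B ^ 2 / 4 := by
    have g0 : (0:ℝ) ≤ s ^ 2 * A := by positivity
    nlinarith [sq_nonneg r]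
  have hαs : |al| * s * A ≤ X * B / 4 := by
    have h1 := mul_le_mul_of_nonneg_left hq (abs_nonneg al)
    have h2 := mul_le_mul_of_nonneg_right hkey.le hB
    have h3 : bet * (|al| * s * A) ≤ bet * (X * B / 4) := by nlinarith [h1, h2]
    exact le_of_mul_le_mul_left h3 hbet
  have hRHS0 : 0 ≤ X * B / 2 + al * s * A := by
    have g1 := mul_le_mul_of_nonneg_right (neg_abs_le al) (mul_nonneg hs hA.le)
    have g2 : (0:ℝ) ≤ X * B := mul_nonneg hX.le hB
    nlinarith [g1, g2, hαs]
  have hsqg : (X * r) ^ 2 ≤ (X * B / 2 + al * s * A) ^ 2 := by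
    have L2 := mul_le_mul_of_nonneg_left hr2 (sq_nonneg X)
    have g1 := mul_le_mul_of_nonneg_left (neg_abs_le al)
      (by positivity : (0:ℝ) ≤ X * B * s * A)
    have g2 := mul_le_mul_of_nonneg_right hkey.le
      (by positivity : (0:ℝ) ≤ X * s * A)
    have g3 : (0:ℝ) ≤ al ^ 2 * s ^ 2 * A ^ 2 := by positivity
    have g4 : (0:ℝ) ≤ X ^ 2 * (s ^ 2 * A) := by positivity
    nlinarith [L2, g1, g2, g3, g4]
  exact le_of_pow_le_pow_left₀ two_ne_zero hRHS0 hsqg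

lemma aux_greatest {E : Type*} [NormedAddCommGroup E] [InnerProductSpace ℝ E]
    (a b x : E) (ha0 : a ≠ 0) (hx0 : x ≠ 0)
    (hangle : ⟪b, a⟫ / (‖b‖ * ‖a‖) > |(⟪x, a⟫)| / (‖x‖ * ‖a‖)) :
    IsGreatest {v : ℝ | ∃ u : E, (⟪a, u⟫ ≤ 0 ∧ ‖u‖ ^ 2 ≤ ⟪b, u⟫) ∧ v = ⟪x, u⟫}
      ((‖x - (⟪x, a⟫ / ‖a‖ ^ 2) • a‖ * ‖b - (⟪b, a⟫ / ‖a‖ ^ 2) • a‖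
        + ⟪x - (⟪x, a⟫ / ‖a‖ ^ 2) • a, b - (⟪b, a⟫ / ‖a‖ ^ 2) • a⟫) / 2) := by
  have hna : 0 < ‖a‖ := norm_pos_iff.mpr ha0
  have hA : 0 < ‖a‖ ^ 2 := by positivity
  have hA0 : ‖a‖ ^ 2 ≠ 0 := ne_of_gt hA
  have hnx : 0 < ‖x‖ := norm_pos_iff.mpr hx0
  set A := ‖a‖ ^ 2 with hAdef
  set α := ⟪x, a⟫ / A with hαdef
  set β := ⟪b, a⟫ / A with hβdef
  set xp := x - α • a with hxpdef
  set bp := b - β • a with hbpdef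
  -- b ≠ 0 and ⟪b,a⟫ > 0
  have hRHSnn : 0 ≤ |(⟪x, a⟫)| / (‖x‖ * ‖a‖) := by positivity
  have hdivpos : 0 < ⟪b, a⟫ / (‖b‖ * ‖a‖) := lt_of_le_of_lt hRHSnn hangle
  have hb0 : b ≠ 0 := by
    rintro rfl; simp at hdivpos
  have hnb : 0 < ‖b‖ := norm_pos_iff.mpr hb0
  have hba : 0 < ⟪b, a⟫ := by
    by_contra h
    push_neg at h
    have : ⟪b, a⟫ / (‖b‖ * ‖a‖) ≤ 0 := div_nonpos_of_nonpos_of_nonneg h (by positivity)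
    linarith
  have hβpos : 0 < β := div_pos hba hA
  -- scalar inner product facts
  have hxa : ⟪x, a⟫ = α * A := by rw [hαdef, div_mul_cancel₀ _ hA0]
  have hba' : ⟪b, a⟫ = β * A := by rw [hβdef, div_mul_cancel₀ _ hA0]
  have haa : ⟪a, a⟫ = A := real_inner_self_eq_norm_sq a
  have hxpa : ⟪xp, a⟫ = 0 := by
    simp [hxpdef, inner_sub_left, real_inner_smul_left, haa, hxa, hAdef]
  have hbpa : ⟪bp, a⟫ = 0 := by
    simp [hbpdef, inner_sub_left, real_inner_smul_left, haa, hba', hAdef]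
  have haxp : ⟪a, xp⟫ = 0 := by rw [real_inner_comm]; exact hxpa
  have habp : ⟪a, bp⟫ = 0 := by rw [real_inner_comm]; exact hbpa
  have hxdec : x = xp + α • a := by simp [hxpdef]
  have hbdec : b = bp + β • a := by simp [hbpdef]
  have hnx2 : ‖x‖ ^ 2 = ‖xp‖ ^ 2 + α ^ 2 * A := by
    rw [← real_inner_self_eq_norm_sq, ← real_inner_self_eq_norm_sq]
    nth_rewrite 1 [hxdec]; nth_rewrite 1 [hxdec]
    simp only [inner_add_left, inner_add_right, real_inner_smul_left, real_inner_smul_right,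
      hxpa, haxp, haa]
    ring
  have hnb2 : ‖b‖ ^ 2 = ‖bp‖ ^ 2 + β ^ 2 * A := by
    rw [← real_inner_self_eq_norm_sq, ← real_inner_self_eq_norm_sq]
    nth_rewrite 1 [hbdec]; nth_rewrite 1 [hbdec]
    simp only [inner_add_left, inner_add_right, real_inner_smul_left, real_inner_smul_right,
      hbpa, habp, haa]
    ring
  -- the product inequality
  have hprod : |(⟪x, a⟫)| * ‖b‖ < ⟪b, a⟫ * ‖x‖ := by
    have h1 : 0 < ‖x‖ * ‖a‖ := by positivity
    have h2 : 0 < ‖b‖ * ‖a‖ := by positivity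
    have h3 := (div_lt_div_iff₀ h1 h2).mp hangle
    have h4 : (|(⟪x, a⟫)| * ‖b‖) * ‖a‖ < (⟪b, a⟫ * ‖x‖) * ‖a‖ := by
      nlinarith [h3]
    exact lt_of_mul_lt_mul_right h4 (norm_nonneg a)
  have hsq : (⟪x, a⟫) ^ 2 * ‖b‖ ^ 2 < (⟪b, a⟫) ^ 2 * ‖x‖ ^ 2 := by
    have hL : 0 ≤ |(⟪x, a⟫)| * ‖b‖ := by positivity
    have h := mul_self_lt_mul_self hL hprod
    calc (⟪x, a⟫) ^ 2 * ‖b‖ ^ 2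
        = (|(⟪x, a⟫)| * ‖b‖) * (|(⟪x, a⟫)| * ‖b‖) := by rw [← sq_abs]; ring
      _ < (⟪b, a⟫ * ‖x‖) * (⟪b, a⟫ * ‖x‖) := h
      _ = (⟪b, a⟫) ^ 2 * ‖x‖ ^ 2 := by ring
  have hkey2 : α ^ 2 * ‖bp‖ ^ 2 < β ^ 2 * ‖xp‖ ^ 2 := by
    rw [hxa, hba', hnx2, hnb2] at hsq
    have h5 : α ^ 2 * ‖bp‖ ^ 2 * A ^ 2 < β ^ 2 * ‖xp‖ ^ 2 * A ^ 2 := by nlinarith [hsq]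
    
    exact lt_of_mul_lt_mul_right h5 (sq_nonneg A)
  have hnxp : 0 < ‖xp‖ := by
    rcases (norm_nonneg xp).lt_or_eq with h | h
    · exact h
    · exfalso
      rw [← h] at hkey2
      simp at hkey2
      exact absurd hkey2 (by positivity : (0:ℝ) ≤ α ^ 2 * ‖bp‖ ^ 2).not_gt
  have hkey : |α| * ‖bp‖ < β * ‖xp‖ := by
    refine lt_of_pow_lt_pow_left₀ 2 (by positivity) ?_
    have e : (|α| * ‖bp‖) ^ 2 = α ^ 2 * ‖bp‖ ^ 2 := by rw [mul_pow, sq_abs]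
    have e2 : (β * ‖xp‖) ^ 2 = β ^ 2 * ‖xp‖ ^ 2 := by ring
    rw [e, e2]; exact hkey2
  constructor
  · -- membership
    set c : ℝ := ‖bp‖ / (2 * ‖xp‖) with hcdef
    refine ⟨(1 / 2 : ℝ) • bp + c • xp, ⟨?_, ?_⟩, ?_⟩
    · simp [inner_add_right, real_inner_smul_right, habp, haxp]
    · have hu2 : ‖(1 / 2 : ℝ) • bp + c • xp‖ ^ 2
          = ‖bp‖ ^ 2 / 2 + c * ⟪bp, xp⟫ := by
        rw [← real_inner_self_eq_norm_sq]
        simp only [inner_add_left, inner_add_right, real_inner_smul_left,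
          real_inner_smul_right]
        rw [real_inner_self_eq_norm_sq bp, real_inner_self_eq_norm_sq xp]
        have : c ^ 2 * ‖xp‖ ^ 2 = ‖bp‖ ^ 2 / 4 := by
          rw [hcdef]; field_simp; ring
        rw [real_inner_comm xp bp]
        linear_combination this
      have hbu : ⟪b, (1 / 2 : ℝ) • bp + c • xp⟫ = ‖bp‖ ^ 2 / 2 + c * ⟪bp, xp⟫ := by
        nth_rewrite 1 [hbdec]
        simp only [inner_add_left, inner_add_right, real_inner_smul_left,
          real_inner_smul_right, real_inner_self_eq_norm_sq, habp, haxp]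
        ring
      rw [hu2, hbu]
    · rw [hxdec]
      simp only [inner_add_left, inner_add_right, real_inner_smul_left,
        real_inner_smul_right, haxp, habp]
      rw [real_inner_self_eq_norm_sq xp, hcdef]
      field_simp
      ring
  · -- upper bound
    rintro v ⟨u, ⟨h1, h2⟩, rfl⟩
    set t := ⟪a, u⟫ / A with htdef
    have ht : t ≤ 0 := div_nonpos_of_nonpos_of_nonneg h1 hA.le
    set up := u - t • a with hupdef
    have hau : ⟪a, u⟫ = t * A := by rw [htdef, div_mul_cancel₀ _ hA0]
    have haup : ⟪a, up⟫ = 0 := by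
      simp [hupdef, inner_sub_right, real_inner_smul_right, haa, hau, hAdef]
    have hupa : ⟪up, a⟫ = 0 := by rw [real_inner_comm]; exact haup
    have hudec : u = up + t • a := by simp [hupdef]
    have e1 : ⟪x, u⟫ = ⟪xp, up⟫ + α * t * A := by
      rw [hxdec, hudec]
      simp only [inner_add_left, inner_add_right, real_inner_smul_left,
        real_inner_smul_right, haxp, hupa, hxpa, haa]
      rw [haup]
      ring
    have e2 : ⟪b, u⟫ = ⟪bp, up⟫ + β * t * A := by
      rw [hbdec, hudec]
      simp only [inner_add_left, inner_add_right, real_inner_smul_left,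
        real_inner_smul_right, habp, hupa, hbpa, haa]
      rw [haup]
      ring
    have e3 : ‖u‖ ^ 2 = ‖up‖ ^ 2 + t ^ 2 * A := by
      rw [← real_inner_self_eq_norm_sq, ← real_inner_self_eq_norm_sq]
      nth_rewrite 1 [hudec]; nth_rewrite 1 [hudec]
      simp only [inner_add_left, inner_add_right, real_inner_smul_left,
        real_inner_smul_right, hupa, haup, haa]
      ring
    set r := ‖up - (1 / 2 : ℝ) • bp‖ with hrdef
    have hr0 : 0 ≤ r := norm_nonneg _
    have e4 : r ^ 2 = ‖up‖ ^ 2 - ⟪bp, up⟫ + ‖bp‖ ^ 2 / 4 := by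
      rw [hrdef, ← real_inner_self_eq_norm_sq]
      simp only [inner_sub_left, inner_sub_right, real_inner_smul_left,
        real_inner_smul_right, real_inner_self_eq_norm_sq]
      rw [real_inner_comm up bp, norm_smul, Real.norm_eq_abs,
        show |(1 / 2 : ℝ)| = 1 / 2 by norm_num]
      ring
    have hr2 : r ^ 2 ≤ ‖bp‖ ^ 2 / 4 + (β * t - t ^ 2) * A := by
      rw [e2, e3] at h2
      linarith [e4, h2]
      
    have hcs : ⟪xp, up⟫ ≤ ‖xp‖ * r + ⟪xp, bp⟫ / 2 := by
      have := real_inner_le_norm xp (up - (1 / 2 : ℝ) • bp)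
      simp only [inner_sub_right, real_inner_smul_right] at this
      rw [← hrdef] at this
      linarith
    rw [e1]
    have hgoal : ‖xp‖ * r + α * t * A ≤ ‖xp‖ * ‖bp‖ / 2 := by
      have hb := scalar_bound ‖xp‖ ‖bp‖ β (-t) A r α hnxp hA hβpos
        (by linarith) hr0 (norm_nonneg bp) hkey (by linarith [hr2])
      linarith [hb]
    linarith [hcs, hgoal]

theorem stmt_12 {n p : ℕ} (X : Fin p → EuclideanSpace ℝ (Fin n))
    (y : EuclideanSpace ℝ (Fin n)) (hy : y ≠ 0) (lmax : ℝ)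
    (hlmax : IsGreatest (Set.range fun j => |(⟪X j, y⟫)|) lmax)
    (lam1 lam2 : ℝ) (hlam2 : 0 < lam2) (hlam12 : lam2 < lam1) (hlam1le : lam1 ≤ lmax)
    (θ1 : EuclideanSpace ℝ (Fin n))
    (hθ1mem : ∀ j, |(⟪X j, θ1⟫)| ≤ 1)
    (hθ1opt : ∀ θ : EuclideanSpace ℝ (Fin n), (∀ j, |(⟪X j, θ⟫)| ≤ 1) →
      ‖θ1 - (1 / lam1) • y‖ ≤ ‖θ - (1 / lam1) • y‖)
    (a b : EuclideanSpace ℝ (Fin n))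
    (ha : a = (1 / lam1) • y - θ1) (hb : b = (1 / lam2) • y - θ1)
    (j : Fin p) (hj : X j ≠ 0)
    (ha0 : a ≠ 0)
    (hangle : ⟪b, a⟫ / (‖b‖ * ‖a‖) > |(⟪X j, a⟫)| / (‖X j‖ * ‖a‖)) :
    IsGreatest {v : ℝ | ∃ θ : EuclideanSpace ℝ (Fin n),
        (⟪θ1 - (1 / lam1) • y, θ - θ1⟫ ≥ 0 ∧ ⟪θ - (1 / lam2) • y, θ1 - θ⟫ ≥ 0) ∧
        v = ⟪X j, θ⟫}
      (⟪X j, θ1⟫ + ((1 / lam2 - 1 / lam1) / 2) *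
        (‖X j - (⟪X j, a⟫ / ‖a‖ ^ 2) • a‖ * ‖y - (⟪y, a⟫ / ‖a‖ ^ 2) • a‖
          + ⟪X j - (⟪X j, a⟫ / ‖a‖ ^ 2) • a, y - (⟪y, a⟫ / ‖a‖ ^ 2) • a⟫)) := by
  have hκ : (0:ℝ) < 1 / lam2 - 1 / lam1 := by
    have h1 : 1 / lam1 < 1 / lam2 := one_div_lt_one_div_of_lt hlam2 hlam12
    linarith
  have hna : (0:ℝ) < ‖a‖ := norm_pos_iff.mpr ha0
  have hA : (0:ℝ) < ‖a‖ ^ 2 := by positivity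
  have hA0 : (‖a‖:ℝ) ^ 2 ≠ 0 := ne_of_gt hA
  have hbeq : b = a + (1 / lam2 - 1 / lam1) • y := by
    rw [ha, hb]; module
  have key := aux_greatest a b (X j) ha0 hj hangle
  have hbp : b - (⟪b, a⟫ / ‖a‖ ^ 2) • a
      = (1 / lam2 - 1 / lam1) • (y - (⟪y, a⟫ / ‖a‖ ^ 2) • a) := by
    have hba2 : ⟪b, a⟫ = ‖a‖ ^ 2 + (1 / lam2 - 1 / lam1) * ⟪y, a⟫ := by
      rw [hbeq, inner_add_left, real_inner_smul_left, real_inner_self_eq_norm_sq]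
    have hsc : (‖a‖ ^ 2 + (1 / lam2 - 1 / lam1) * ⟪y, a⟫) / ‖a‖ ^ 2
        = 1 + (1 / lam2 - 1 / lam1) * (⟪y, a⟫ / ‖a‖ ^ 2) := by
      field_simp
    rw [hba2, hsc, hbeq]
    module
  have hval : (‖X j - (⟪X j, a⟫ / ‖a‖ ^ 2) • a‖ * ‖b - (⟪b, a⟫ / ‖a‖ ^ 2) • a‖
        + ⟪X j - (⟪X j, a⟫ / ‖a‖ ^ 2) • a, b - (⟪b, a⟫ / ‖a‖ ^ 2) • a⟫) / 2
      = ((1 / lam2 - 1 / lam1) / 2) *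
        (‖X j - (⟪X j, a⟫ / ‖a‖ ^ 2) • a‖ * ‖y - (⟪y, a⟫ / ‖a‖ ^ 2) • a‖
          + ⟪X j - (⟪X j, a⟫ / ‖a‖ ^ 2) • a, y - (⟪y, a⟫ / ‖a‖ ^ 2) • a⟫) := by
    rw [hbp, norm_smul, real_inner_smul_right, Real.norm_eq_abs, abs_of_pos hκ]
    ring
  have hma : θ1 - (1 / lam1) • y = -a := by rw [ha]; module
  constructor
  · obtain ⟨u, ⟨hu1, hu2⟩, huv⟩ := key.1
    refine ⟨θ1 + u, ⟨?_, ?_⟩, ?_⟩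
    · have e : (θ1 + u) - θ1 = u := by abel
      rw [hma, e, inner_neg_left]
      linarith
    · have e2 : (θ1 + u) - (1 / lam2) • y = u - b := by rw [hb]; abel
      have e3 : θ1 - (θ1 + u) = -u := by abel
      rw [e2, e3, inner_neg_right, inner_sub_left]
      have hself : ⟪u, u⟫ = ‖u‖ ^ 2 := real_inner_self_eq_norm_sq u
      have hbu : ⟪b, u⟫ = ⟪u, b⟫ := real_inner_comm u b
      linarith [hu2]
    · rw [inner_add_right]
      linarith [hval, huv]
  · rintro v ⟨θ, ⟨hc1, hc2⟩, rfl⟩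
    have hub : ⟪X j, θ - θ1⟫ ∈ {v : ℝ | ∃ u : EuclideanSpace ℝ (Fin n),
        (⟪a, u⟫ ≤ 0 ∧ ‖u‖ ^ 2 ≤ ⟪b, u⟫) ∧ v = ⟪X j, u⟫} := by
      refine ⟨θ - θ1, ⟨?_, ?_⟩, rfl⟩
      · rw [hma, inner_neg_left] at hc1
        linarith
      · have e2 : θ - (1 / lam2) • y = (θ - θ1) - b := by rw [hb]; abel
        have e3 : θ1 - θ = -(θ - θ1) := by abel
        rw [e2, e3, inner_neg_right, inner_sub_left] at hc2
        have hself : ⟪θ - θ1, θ - θ1⟫ = ‖θ - θ1‖ ^ 2 :=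
          real_inner_self_eq_norm_sq (θ - θ1)
        have hbu : ⟪b, θ - θ1⟫ = ⟪θ - θ1, b⟫ := real_inner_comm (θ - θ1) b
        linarith [hc2]
    have := key.2 hub
    have hsplit : ⟪X j, θ⟫ = ⟪X j, θ1⟫ + ⟪X j, θ - θ1⟫ := by
      rw [inner_sub_right]; ring
    linarith [hval, this]
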